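/- arXiv:1810.11389 — 4 statements merged into one kernel-verified Lean document; each statement's English description precedes it below -/
import Mathlib

section
/- Let 𝕂_d be the set of convex domains Ω ⊂ ℂ^d containing no complex affine line such that, for every i = 1, …, d, Z_i ∩ Ω = ∅ and ie_1 + 𝔻_1·e_i ⊂ Ω. Then 𝕂_d is compact: every sequence of domains in 𝕂_d has a subsequence converging in the local Hausdorff topology to a domain belonging to 𝕂_d. -/
open Set Metric Filter Topology
open scoped ENNReal NNReal

noncomputable section

section Defs

variable {E F : Type*} [NormedAddCommGroup E] [NormedSpace ℂ E]
  [NormedAddCommGroup F] [NormedSpace ℂ F]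

/-- A convex domain: a non-empty open convex subset. -/
def IsConvexDomain (Ω : Set E) : Prop := IsOpen Ω ∧ Convex ℝ Ω ∧ Ω.Nonempty

/-- `Ω` contains no complex affine line `a + ℂ·b`, `b ≠ 0`. -/
def NoComplexLine (Ω : Set E) : Prop :=
  ∀ a b : E, b ≠ 0 → ¬ (∀ lam : ℂ, a + lam • b ∈ Ω)

/-- Membership in `𝕏_d`: a convex domain containing no complex affine line. -/
def InX (Ω : Set E) : Prop := IsConvexDomain Ω ∧ NoComplexLine Ω

/-- Convergence of a sequence of sets in the local Hausdorff topology. -/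
def LocHausConv (Ωn : ℕ → Set E) (Ω : Set E) : Prop :=
  ∃ R₀ : ℝ, 0 < R₀ ∧ ∀ R : ℝ, R₀ ≤ R →
    Tendsto (fun n => Metric.hausdorffDist (Ωn n ∩ Metric.ball 0 R) (Ω ∩ Metric.ball 0 R))
      atTop (nhds 0)

/-- The sequence `z` is compactly divergent in `Ω`. -/
def CompactlyDivergent (Ω : Set E) (z : ℕ → E) : Prop :=
  ∀ K : Set E, IsCompact K → K ⊆ Ω → ∃ N : ℕ, ∀ n ≥ N, z n ∉ K

/-- `Ω'` is an affine limit of `Ω`. -/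
def IsAffineLimit (Ω Ω' : Set E) : Prop :=
  InX Ω' ∧
  ∃ (z : ℕ → E) (zlim : E) (A : ℕ → (E ≃ᵃ[ℂ] E)),
    (∀ n, z n ∈ Ω) ∧ CompactlyDivergent Ω z ∧ zlim ∈ Ω' ∧
    LocHausConv (fun n => (A n) '' Ω) Ω' ∧
    Tendsto (fun n => A n (z n)) atTop (nhds zlim)

/-- `S ⊆ E` and `T ⊆ F` are biholomorphic. -/
def Biholomorphic (S : Set E) (T : Set F) : Prop :=
  ∃ (f : E → F) (g : F → E),
    DifferentiableOn ℂ f S ∧ DifferentiableOn ℂ g T ∧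
    MapsTo f S T ∧ MapsTo g T S ∧ InvOn g f S T

/-- The bidisk `𝔻 × 𝔻 ⊆ ℂ × ℂ`. -/
def unitBidisk : Set (ℂ × ℂ) := (Metric.ball (0:ℂ) 1) ×ˢ (Metric.ball (0:ℂ) 1)

/-- The infinitesimal Kobayashi metric of `Ω ⊆ E`. -/
def kob (Ω : Set E) (z v : E) : ℝ :=
  sInf { c : ℝ | ∃ (ξ : ℂ) (f : ℂ → E),
    DifferentiableOn ℂ f (Metric.ball 0 1) ∧ MapsTo f (Metric.ball 0 1) Ω ∧
    f 0 = z ∧ ξ • deriv f 0 = v ∧ c = ‖ξ‖ }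

/-- `δ_Ω(z; v)`: the distance from `z` to `(z + ℂ·v) ∩ ∂Ω`, valued in `ℝ≥0∞`
(`⊤` when the intersection is empty). -/
def distInDir (Ω : Set E) (z v : E) : ℝ≥0∞ :=
  EMetric.infEdist z ({x | ∃ lam : ℂ, x = z + lam • v} ∩ frontier Ω)

end Defs


/-- The square `𝔻₁ = {z : |Re z| + |Im z| < 1}`. -/
def D1set : Set ℂ := {z : ℂ | |z.re| + |z.im| < 1}

/-- The planes `Z_1, …, Z_d` (indexed here by `Fin d`): `Z_1 = span{e_2, …, e_d}` and,
for `2 ≤ j ≤ d`, `Z_j = i e_1 + e_j + span{e_{j+1}, …, e_d}`. -/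
def Zset (d : ℕ) [NeZero d] (m : Fin d) : Set (EuclideanSpace ℂ (Fin d)) :=
  if m = 0 then {z | z 0 = 0}
  else {z | z 0 = Complex.I ∧ z m = 1 ∧ ∀ k : Fin d, 0 < k → k < m → z k = 0}

/-- The family `𝕂_d`: convex domains `Ω ∈ 𝕏_d` with `Z_i ∩ Ω = ∅` and
`i e_1 + 𝔻₁·e_i ⊆ Ω` for all `i = 1, …, d`. -/
def Kd (d : ℕ) [NeZero d] : Set (Set (EuclideanSpace ℂ (Fin d))) :=
  {Ω | InX Ω ∧ ∀ m : Fin d,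
    Zset d m ∩ Ω = ∅ ∧
    ∀ w ∈ D1set,
      Complex.I • EuclideanSpace.single (0 : Fin d) (1:ℂ) +
        w • EuclideanSpace.single m (1:ℂ) ∈ Ω}

namespace S2

set_option linter.unusedSectionVars false

section Gauge
variable {F : Type*} [NormedAddCommGroup F] [NormedSpace ℝ F]

lemma gauge_lip {s : Set F} (hconv : Convex ℝ s) {r : ℝ} (hr : 0 < r)
    (hball : ball (0:F) r ⊆ s) (x y : F) :
    |gauge s x - gauge s y| ≤ ‖x - y‖ / r := by
  have habs : Absorbent ℝ s :=
    absorbent_nhds_zero (mem_of_superset (ball_mem_nhds 0 hr) hball)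
  have habs' : Absorbent ℝ (ball (0:F) r) := absorbent_nhds_zero (ball_mem_nhds 0 hr)
  have key : ∀ a b : F, gauge s a - gauge s b ≤ ‖a - b‖ / r := by
    intro a b
    have h1 : gauge s a ≤ gauge s b + gauge s (a - b) := by
      have h := gauge_add_le hconv habs b (a - b)
      have e : b + (a - b) = a := by abel
      rwa [e] at h
    have h2 : gauge s (a - b) ≤ gauge (ball (0:F) r) (a - b) := gauge_mono habs' hball _
    rw [gauge_ball hr.le] at h2
    linarith
  rcases abs_sub_le_iff.2 ⟨key x y, by rw [norm_sub_rev]; exact key y x⟩ with h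
  exact h

lemma gauge_le_norm_div {s : Set F} (hconv : Convex ℝ s) {r : ℝ} (hr : 0 < r)
    (hball : ball (0:F) r ⊆ s) (x : F) : gauge s x ≤ ‖x‖ / r := by
  have := gauge_lip hconv hr hball x 0
  rw [gauge_zero, sub_zero, sub_zero] at this
  exact (le_abs_self _).trans this

lemma haus_step {A B : Set F} {gA gB : F → ℝ} {p : F} (hp : ‖p‖ ≤ 1) {R ε : ℝ}
    (hR : 2 ≤ R) (hε0 : 0 < ε) (hε1 : ε ≤ 1)
    (hA : ∀ x, x ∈ A ↔ gA (x - p) < 1) (hB : ∀ x, x ∈ B ↔ gB (x - p) < 1)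
    (hBhom : ∀ t : ℝ, 0 ≤ t → ∀ x, gB (t • x) = t * gB x)
    (hBnn : ∀ x, 0 ≤ gB x)
    (hclose : ∀ x ∈ closedBall (0:F) (R+1), |gA x - gB x| ≤ ε) :
    ∀ x ∈ A ∩ ball 0 R, ∃ y ∈ B ∩ ball 0 R, dist x y ≤ ε * (R + 1) := by
  rintro x ⟨hxA, hxB⟩
  have hxR : ‖x‖ < R := mem_ball_zero_iff.1 hxB
  have hxpR : ‖x - p‖ ≤ R + 1 := by
    calc ‖x - p‖ ≤ ‖x‖ + ‖p‖ := norm_sub_le x p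
      _ ≤ R + 1 := by linarith
  have hcl := hclose (x - p) (mem_closedBall_zero_iff.2 hxpR)
  have hgA : gA (x - p) < 1 := (hA x).1 hxA
  have hgB : gB (x - p) ≤ gA (x - p) + ε := by
    rcases abs_le.1 hcl with ⟨h1, h2⟩; linarith
  refine ⟨p + (1 - ε) • (x - p), ⟨?_, ?_⟩, ?_⟩
  · rw [hB, add_sub_cancel_left, hBhom (1 - ε) (by linarith)]
    nlinarith [hBnn (x - p)]
  · rw [mem_ball_zero_iff]
    have hy : p + (1 - ε) • (x - p) = (1 - ε) • x + ε • p := by module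
    rw [hy]
    calc ‖(1 - ε) • x + ε • p‖ ≤ ‖(1 - ε) • x‖ + ‖ε • p‖ := norm_add_le _ _
      _ = (1 - ε) * ‖x‖ + ε * ‖p‖ := by
          rw [norm_smul, norm_smul, Real.norm_eq_abs, Real.norm_eq_abs,
            abs_of_nonneg (by linarith : (0:ℝ) ≤ 1 - ε), abs_of_pos hε0]
      _ < R := by nlinarith
  · rw [dist_eq_norm]
    have hxy : x - (p + (1 - ε) • (x - p)) = ε • (x - p) := by module
    rw [hxy, norm_smul, Real.norm_eq_abs, abs_of_pos hε0]
    have : ε * ‖x - p‖ ≤ ε * (R + 1) := by gcongr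
    linarith

lemma haus_bound {A B : Set F} {gA gB : F → ℝ} {p : F} (hp : ‖p‖ ≤ 1) {R ε : ℝ}
    (hR : 2 ≤ R) (hε0 : 0 < ε) (hε1 : ε ≤ 1)
    (hA : ∀ x, x ∈ A ↔ gA (x - p) < 1) (hB : ∀ x, x ∈ B ↔ gB (x - p) < 1)
    (hAhom : ∀ t : ℝ, 0 ≤ t → ∀ x, gA (t • x) = t * gA x)
    (hBhom : ∀ t : ℝ, 0 ≤ t → ∀ x, gB (t • x) = t * gB x)
    (hAnn : ∀ x, 0 ≤ gA x) (hBnn : ∀ x, 0 ≤ gB x)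
    (hclose : ∀ x ∈ closedBall (0:F) (R+1), |gA x - gB x| ≤ ε) :
    hausdorffDist (A ∩ ball 0 R) (B ∩ ball 0 R) ≤ ε * (R + 1) := by
  apply hausdorffDist_le_of_mem_dist (by positivity)
  · exact haus_step hp hR hε0 hε1 hA hB hBhom hBnn hclose
  · exact haus_step hp hR hε0 hε1 hB hA hAhom hAnn
      (fun x hx => by rw [abs_sub_comm]; exact hclose x hx)

/-- if a real functional is ≥ u on ζ + W with W closed under real scaling, it kills W -/
lemma kills_of_ge (f : F →L[ℝ] ℝ) (u : ℝ) (ζ : F) (W : Set F) (hW : ∀ t : ℝ, ∀ w ∈ W, t • w ∈ W)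
    (hge : ∀ w ∈ W, u ≤ f (ζ + w)) : ∀ w ∈ W, f w = 0 := by
  intro w hw
  by_contra hc
  have h := hge (((u - 1 - f ζ) / f w) • w) (hW _ w hw)
  rw [map_add, map_smul] at h
  simp only [smul_eq_mul] at h
  rw [div_mul_cancel₀ _ hc] at h
  linarith

end Gauge

variable {d : ℕ} [NeZero d]

def pt (d : ℕ) [NeZero d] : EuclideanSpace ℂ (Fin d) :=
  Complex.I • EuclideanSpace.single 0 1

lemma norm_pt : ‖pt d‖ = 1 := by
  simp [pt, EuclideanSpace.norm_single, norm_smul]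

lemma coord_norm_le (v : EuclideanSpace ℂ (Fin d)) (k : Fin d) : ‖v k‖ ≤ ‖v‖ := by
  have h := norm_inner_le_norm (𝕜 := ℂ) (EuclideanSpace.single k (1:ℂ)) v
  simpa [EuclideanSpace.inner_single_left, EuclideanSpace.norm_single] using h

lemma ball_subset_of_squares {Ω : Set (EuclideanSpace ℂ (Fin d))} (hconv : Convex ℝ Ω)
    (hsq : ∀ m : Fin d, ∀ w ∈ D1set, pt d + w • EuclideanSpace.single m 1 ∈ Ω) :
    Metric.ball (pt d) ((4*(d:ℝ))⁻¹) ⊆ Ω := by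
  intro x hx
  have hd0 : (d:ℝ) ≠ 0 := Nat.cast_ne_zero.2 (NeZero.ne d)
  have hdpos : (0:ℝ) < d := Nat.cast_pos.2 (Nat.pos_of_ne_zero (NeZero.ne d))
  set v : EuclideanSpace ℂ (Fin d) := x - pt d with hv
  have hvnorm : ‖v‖ < (4*(d:ℝ))⁻¹ := by
    rw [hv, ← dist_eq_norm]; exact mem_ball.1 hx
  have hq : ∀ k : Fin d, pt d + ((d:ℂ) * v k) • EuclideanSpace.single k (1:ℂ) ∈ Ω := by
    intro k
    apply hsq k
    have h1 : ‖(d:ℂ) * v k‖ ≤ (d:ℝ) * ‖v‖ := by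
      rw [norm_mul]
      gcongr
      · simp
      · exact coord_norm_le v k
    have h2 : ‖(d:ℂ) * v k‖ < 4⁻¹ := by
      calc ‖(d:ℂ) * v k‖ ≤ (d:ℝ) * ‖v‖ := h1
        _ < (d:ℝ) * (4*(d:ℝ))⁻¹ := by gcongr
        _ = 4⁻¹ := by field_simp
    have hre := Complex.abs_re_le_norm ((d:ℂ) * v k)
    have him := Complex.abs_im_le_norm ((d:ℂ) * v k)
    simp only [D1set, Set.mem_setOf_eq]
    linarith
  have hsum : ∑ k : Fin d, (d:ℝ)⁻¹ •
      (pt d + ((d:ℂ) * v k) • EuclideanSpace.single k (1:ℂ)) = x := by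
    ext j
    rw [WithLp.ofLp_sum, Finset.sum_apply]
    have : ∀ k : Fin d, ((d:ℝ)⁻¹ •
        (pt d + ((d:ℂ) * v k) • EuclideanSpace.single k (1:ℂ))) j
        = (d:ℝ)⁻¹ • (pt d j) + (if j = k then v j else 0) := by
      intro k
      simp only [PiLp.smul_apply, PiLp.add_apply, EuclideanSpace.single_apply, smul_eq_mul,
        mul_ite, mul_one, mul_zero, smul_add]
      congr 1
      split_ifs with h
      · subst h
        rw [Complex.real_smul]
        push_cast
        rw [← mul_assoc, inv_mul_cancel₀ (by exact_mod_cast hd0 : (d:ℂ) ≠ 0), one_mul]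
      · simp
    rw [Finset.sum_congr rfl (fun k _ => this k)]
    rw [Finset.sum_add_distrib]
    simp only [Finset.sum_const, Finset.card_univ, Fintype.card_fin, nsmul_eq_mul,
      Finset.sum_ite_eq', Finset.sum_ite_eq, Finset.mem_univ, if_true, Complex.real_smul]
    push_cast
    rw [← mul_assoc, mul_inv_cancel₀ (by exact_mod_cast hd0 : (d:ℂ) ≠ 0), one_mul]
    show pt d j + (x - pt d) j = x j
    simp
  have := hconv.sum_mem (t := Finset.univ) (w := fun _ : Fin d => (d:ℝ)⁻¹)
    (fun _ _ => by positivity) (by simp [Finset.card_univ, hd0]) (fun k _ => hq k)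
  rwa [hsum] at this

lemma zset_convex (m : Fin d) : Convex ℝ (Zset d m) := by
  unfold Zset
  split_ifs
  · intro x hx y hy a b ha hb hab
    simp only [mem_setOf_eq] at *
    show a • x 0 + b • y 0 = 0
    rw [hx, hy]; simp
  · intro x hx y hy a b ha hb hab
    obtain ⟨hx0, hxm, hxk⟩ := hx
    obtain ⟨hy0, hym, hyk⟩ := hy
    refine ⟨?_, ?_, ?_⟩
    · show a • x 0 + b • y 0 = Complex.I
      rw [hx0, hy0, ← add_smul, hab, one_smul]
    · show a • x m + b • y m = 1
      rw [hxm, hym, ← add_smul, hab, one_smul]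
    · intro k hk1 hk2
      show a • x k + b • y k = 0
      rw [hxk k hk1 hk2, hyk k hk1 hk2]; simp

lemma coe_smul' (t : ℝ) (v : EuclideanSpace ℂ (Fin d)) : ((t:ℂ)) • v = t • v := by
  rw [← Complex.coe_algebraMap, algebraMap_smul]

lemma mem_zset_of_ne {m : Fin d} (hm : m ≠ 0) :
    pt d + EuclideanSpace.single m (1:ℂ) ∈ Zset d m := by
  rw [Zset, if_neg hm]
  refine ⟨?_, ?_, ?_⟩
  · show pt d 0 + EuclideanSpace.single m (1:ℂ) 0 = Complex.I
    simp [pt, EuclideanSpace.single_apply, Ne.symm hm, PiLp.smul_apply]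
  · show pt d m + EuclideanSpace.single m (1:ℂ) m = 1
    simp [pt, EuclideanSpace.single_apply, hm, PiLp.smul_apply]
  · intro k hk1 hk2
    show pt d k + EuclideanSpace.single m (1:ℂ) k = 0
    simp [pt, EuclideanSpace.single_apply, hk1.ne', (ne_of_lt hk2), PiLp.smul_apply]

lemma zero_mem_zset0 : (0 : EuclideanSpace ℂ (Fin d)) ∈ Zset d 0 := by
  rw [Zset, if_pos rfl]; show (0 : EuclideanSpace ℂ (Fin d)) 0 = 0; rfl

lemma noComplexLine_of {Ω : Set (EuclideanSpace ℂ (Fin d))} (hop : IsOpen Ω)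
    (hconv : Convex ℝ Ω) (hp : pt d ∈ Ω) (hdisj : ∀ m : Fin d, Zset d m ∩ Ω = ∅) :
    NoComplexLine Ω := by
  intro a b hb hline
  have sep : ∀ m : Fin d, ∃ (f : EuclideanSpace ℂ (Fin d) →L[ℝ] ℝ) (u : ℝ),
      (∀ x ∈ Ω, f x < u) ∧ (∀ z ∈ Zset d m, u ≤ f z) :=
    fun m => geometric_hahn_banach_open hconv hop (zset_convex m)
      (Set.disjoint_iff_inter_eq_empty.2 (by rw [inter_comm]; exact hdisj m))
  have key : ∀ m : Fin d, (∀ j : Fin d, j < m → b j = 0) → b m = 0 := by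
    intro m IH
    by_contra hbm
    obtain ⟨f, u, hfΩ, hfZ⟩ := sep m
    have hfb : ∀ lam : ℂ, f (lam • b) = 0 := by
      intro lam
      by_contra hc
      have ht : ∀ t : ℝ, f a + t * f (lam • b) < u := by
        intro t
        have := hfΩ _ (hline ((t:ℂ) * lam))
        rwa [mul_smul, coe_smul', map_add, map_smul, smul_eq_mul] at this
      have := ht ((u - f a) / f (lam • b))
      rw [div_mul_cancel₀ _ hc] at this
      linarith
    set W : Set (EuclideanSpace ℂ (Fin d)) := {w | ∀ k : Fin d, k ≤ m → w k = 0} with hWdef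
    have hWscale : ∀ t : ℝ, ∀ w ∈ W, t • w ∈ W := by
      intro t w hw k hk
      show t • w k = 0
      rw [hw k hk]; simp
    have hkill : ∀ w ∈ W, f w = 0 := by
      by_cases hm : m = 0
      · refine kills_of_ge f u 0 W hWscale ?_
        intro w hw
        rw [zero_add]
        apply hfZ
        have hw0 : w 0 = 0 := hw 0 (le_of_eq hm.symm)
        rw [hm, Zset, if_pos rfl]
        exact hw0
      · refine kills_of_ge f u (pt d + EuclideanSpace.single m (1:ℂ)) W hWscale ?_
        intro w hw
        apply hfZ
        have hz := mem_zset_of_ne hm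
        rw [Zset, if_neg hm] at hz
        obtain ⟨h0, hm', hk'⟩ := hz
        rw [Zset, if_neg hm]
        refine ⟨?_, ?_, ?_⟩
        · show (pt d + EuclideanSpace.single m (1:ℂ)) 0 + w 0 = Complex.I
          rw [h0, hw 0 (Fin.zero_le m), add_zero]
        · show (pt d + EuclideanSpace.single m (1:ℂ)) m + w m = 1
          rw [hm', hw m le_rfl, add_zero]
        · intro k hk1 hk2
          show (pt d + EuclideanSpace.single m (1:ℂ)) k + w k = 0
          rw [hk' k hk1 hk2, hw k hk2.le, add_zero]
    have hψ : ∀ mu : ℂ, f (mu • EuclideanSpace.single m (1:ℂ)) = 0 := by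
      intro mu
      set w : EuclideanSpace ℂ (Fin d) :=
        (mu / b m) • b - mu • EuclideanSpace.single m (1:ℂ) with hwdef
      have hwW : w ∈ W := by
        intro k hk
        have hwk : w k = (mu / b m) * b k - mu * (EuclideanSpace.single m (1:ℂ) k) := rfl
        rcases hk.lt_or_eq with hlt | heq
        · rw [hwk, IH k hlt, EuclideanSpace.single_apply, if_neg hlt.ne]
          ring
        · subst heq
          rw [hwk, EuclideanSpace.single_apply, if_pos rfl, div_mul_cancel₀ _ hbm, mul_one,
            sub_self]
      have h1 : f ((mu / b m) • b) = 0 := hfb _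
      have h2 : f w = 0 := hkill w hwW
      have h3 : f ((mu / b m) • b) = f (mu • EuclideanSpace.single m (1:ℂ)) + f w := by
        rw [← map_add]; congr 1; rw [hwdef]; abel
      rw [h1, h2, add_zero] at h3
      exact h3.symm
    by_cases hm : m = 0
    · subst hm
      have hall : ∀ x : EuclideanSpace ℂ (Fin d), f x = 0 := by
        intro x
        have hxW : (x - (x 0) • EuclideanSpace.single (0 : Fin d) (1:ℂ)) ∈ W := by
          intro k hk
          have hk0 : k = 0 := Fin.le_zero_iff'.1 hk
          subst hk0
          show x 0 - (x 0) • EuclideanSpace.single (0 : Fin d) (1:ℂ) 0 = 0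
          rw [EuclideanSpace.single_apply, if_pos rfl, smul_eq_mul, mul_one, sub_self]
        have hk := hkill _ hxW
        rw [map_sub] at hk
        have h0 := hψ (x 0)
        linarith
      have hu1 : u ≤ 0 := by
        have := hfZ 0 zero_mem_zset0
        simpa using this
      have hu2 : f (pt d) < u := hfΩ _ hp
      rw [hall] at hu2
      linarith
    · have h1 : u ≤ f (pt d + EuclideanSpace.single m (1:ℂ)) := hfZ _ (mem_zset_of_ne hm)
      have h2 : f (EuclideanSpace.single m (1:ℂ)) = 0 := by
        have := hψ 1; rwa [one_smul] at this
      have h3 : f (pt d) < u := hfΩ _ hp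
      rw [map_add, h2, add_zero] at h1
      linarith
  have hall : ∀ m : Fin d, b m = 0 := by
    have H : ∀ N : ℕ, ∀ m : Fin d, (m : ℕ) < N → b m = 0 := by
      intro N
      induction N with
      | zero => intro m hm; omega
      | succ N ih =>
        intro m hm
        rcases Nat.lt_or_ge (m : ℕ) N with h | h
        · exact ih m h
        · exact key m (fun j hj => ih j (by omega))
    exact fun m => H d m m.isLt
  exact hb (by ext k; exact hall k)


end S2

/-- `𝕂_d` is compact: every sequence in `𝕂_d` has a subsequence converging
in the local Hausdorff topology to a domain belonging to `𝕂_d`. -/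
theorem statement2 (d : ℕ) [NeZero d] (Ωn : ℕ → Set (EuclideanSpace ℂ (Fin d)))
    (h : ∀ n, Ωn n ∈ Kd d) :
    ∃ φ : ℕ → ℕ, StrictMono φ ∧ ∃ Ω ∈ Kd d, LocHausConv (fun j => Ωn (φ j)) Ω := by
  classical
  have hdpos : (0:ℝ) < (d:ℝ) := Nat.cast_pos.2 (Nat.pos_of_ne_zero (NeZero.ne d))
  set r : ℝ := (4*(d:ℝ))⁻¹ with hrdef
  have hrpos : 0 < r := by rw [hrdef]; positivity
  set p : EuclideanSpace ℂ (Fin d) := S2.pt d with hpdef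
  have hpnorm : ‖p‖ = 1 := S2.norm_pt
  set S : ℕ → Set (EuclideanSpace ℂ (Fin d)) := fun n => (fun x => x + p) ⁻¹' (Ωn n) with hSdef
  have hmemS : ∀ n x, x ∈ S n ↔ x + p ∈ Ωn n := fun n x => Iff.rfl
  have hΩop : ∀ n, IsOpen (Ωn n) := fun n => (h n).1.1.1
  have hΩcv : ∀ n, Convex ℝ (Ωn n) := fun n => (h n).1.1.2.1
  have hsq : ∀ n (m : Fin d), ∀ w ∈ D1set, p + w • EuclideanSpace.single m (1:ℂ) ∈ Ωn n :=
    fun n m w hw => ((h n).2 m).2 w hw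
  have hSop : ∀ n, IsOpen (S n) := fun n => (hΩop n).preimage (continuous_id.add continuous_const)
  have hSconv : ∀ n, Convex ℝ (S n) := by
    intro n x hx y hy a b ha hb hab
    rw [hmemS]
    have e : a • (x + p) + b • (y + p) = a • x + b • y + (a + b) • p := by
      rw [smul_add, smul_add, add_smul]; abel
    have hmem := (hΩcv n) hx hy ha hb hab
    rw [e, hab, one_smul] at hmem
    exact hmem
  have hS0 : ∀ n, (0 : EuclideanSpace ℂ (Fin d)) ∈ S n := by
    intro n
    rw [hmemS, zero_add]
    have := hsq n 0 0 (by simp [D1set])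
    simpa using this
  have hSball : ∀ n, ball (0 : EuclideanSpace ℂ (Fin d)) r ⊆ S n := by
    intro n x hx
    rw [hmemS, add_comm]
    apply S2.ball_subset_of_squares (hΩcv n) (hsq n)
    rw [mem_ball, dist_eq_norm, add_sub_cancel_left]
    rwa [mem_ball, dist_zero_right] at hx
  have habs : ∀ n, Absorbent ℝ (S n) := fun n =>
    absorbent_nhds_zero (mem_of_superset (ball_mem_nhds 0 hrpos) (hSball n))
  set g : ℕ → EuclideanSpace ℂ (Fin d) → ℝ := fun n => gauge (S n) with hgdef
  have hgnn : ∀ n x, 0 ≤ g n x := fun n x => gauge_nonneg x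
  have hgle : ∀ n x, g n x ≤ ‖x‖ / r := fun n x =>
    S2.gauge_le_norm_div (hSconv n) hrpos (hSball n) x
  have hglip : ∀ n x y, |g n x - g n y| ≤ ‖x - y‖ / r := fun n x y =>
    S2.gauge_lip (hSconv n) hrpos (hSball n) x y
  have hghom : ∀ n (t : ℝ), 0 ≤ t → ∀ x, g n (t • x) = t * g n x := by
    intro n t ht x
    show gauge (S n) (t • x) = t * gauge (S n) x
    rw [gauge_smul_of_nonneg ht, smul_eq_mul]
  have hgiff : ∀ n x, g n x < 1 ↔ x ∈ S n := by
    intro n x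
    have he := gauge_lt_one_eq_self_of_isOpen (hSconv n) (hS0 n) (hSop n)
    constructor
    · intro hx
      have hmem : x ∈ {y | gauge (S n) y < 1} := hx
      rwa [he] at hmem
    · intro hx
      have hmem : x ∈ {y | gauge (S n) y < 1} := by rw [he]; exact hx
      exact hmem
  have hsqS : ∀ n (m : Fin d) (w : ℂ), w ∈ D1set →
      g n (w • EuclideanSpace.single m (1:ℂ)) ≤ (|w.re| + |w.im| + 1) / 2 := by
    intro n m w hw
    have hs1 : |w.re| + |w.im| < 1 := hw
    have hs0nn : (0:ℝ) ≤ |w.re| + |w.im| := by positivity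
    by_cases hw0 : w = 0
    · subst hw0
      show gauge (S n) ((0:ℂ) • _) ≤ _
      rw [zero_smul, gauge_zero]
      norm_num
    · set t : ℝ := (|w.re| + |w.im| + 1) / 2 with ht
      have ht0 : 0 < t := by rw [ht]; linarith
      have hst : |w.re| + |w.im| < t := by rw [ht]; linarith
      have hwt : (t⁻¹ • w) ∈ D1set := by
        have hre : (t⁻¹ • w).re = t⁻¹ * w.re := by
          simp [Complex.real_smul, Complex.mul_re]
        have him : (t⁻¹ • w).im = t⁻¹ * w.im := by
          simp [Complex.real_smul, Complex.mul_im]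
        show |(t⁻¹ • w).re| + |(t⁻¹ • w).im| < 1
        rw [hre, him, abs_mul, abs_mul, abs_of_pos (inv_pos.2 ht0), ← mul_add]
        rw [inv_mul_lt_iff₀ ht0, mul_one]
        exact hst
      have hmem : (t⁻¹ • w) • EuclideanSpace.single m (1:ℂ) ∈ S n := by
        rw [hmemS, add_comm]
        exact hsq n m _ hwt
      have h1 : gauge (S n) ((t⁻¹ • w) • EuclideanSpace.single m (1:ℂ)) ≤ 1 :=
        gauge_le_one_of_mem hmem
      have e2 : t • (t⁻¹ • w) = w := by
        rw [smul_smul, mul_inv_cancel₀ ht0.ne', one_smul]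
      have e : w • EuclideanSpace.single m (1:ℂ)
          = t • ((t⁻¹ • w) • EuclideanSpace.single m (1:ℂ)) := by
        rw [← smul_assoc, e2]
      show g n (w • EuclideanSpace.single m (1:ℂ)) ≤ t
      rw [e, hghom n t ht0.le]
      have := mul_le_mul_of_nonneg_left h1 ht0.le
      have he3 : g n ((t⁻¹ • w) • EuclideanSpace.single m (1:ℂ))
          = gauge (S n) ((t⁻¹ • w) • EuclideanSpace.single m (1:ℂ)) := rfl
      rw [he3]
      linarith
  -- subsequence extraction via compactness of a countable product
  obtain ⟨u, hu⟩ := TopologicalSpace.exists_dense_seq (EuclideanSpace ℂ (Fin d))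
  have hT : IsCompact (univ.pi fun k : ℕ => Icc (0:ℝ) (‖u k‖ / r)) :=
    isCompact_univ_pi fun k => isCompact_Icc
  have hmemT : ∀ n, (fun k => g n (u k)) ∈ (univ.pi fun k : ℕ => Icc (0:ℝ) (‖u k‖ / r)) := by
    intro n
    rw [Set.mem_univ_pi]
    exact fun k => ⟨hgnn n (u k), hgle n (u k)⟩
  obtain ⟨γ, -, φ, hφmono, hφconv⟩ := hT.tendsto_subseq hmemT
  have hpt : ∀ k, Tendsto (fun n => g (φ n) (u k)) atTop (𝓝 (γ k)) := by
    rw [tendsto_pi_nhds] at hφconv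
    exact fun k => hφconv k
  have hex : ∀ x, ∃ L, Tendsto (fun n => g (φ n) x) atTop (𝓝 L) := by
    intro x
    have hC : CauchySeq (fun n => g (φ n) x) := by
      rw [Metric.cauchySeq_iff]
      intro ε hε
      obtain ⟨k, hk⟩ := hu.exists_dist_lt x (by positivity : (0:ℝ) < r * ε / 4)
      have hck : CauchySeq (fun n => g (φ n) (u k)) := (hpt k).cauchySeq
      rw [Metric.cauchySeq_iff] at hck
      obtain ⟨N, hN⟩ := hck (ε / 4) (by linarith)
      refine ⟨N, fun m hm n hn => ?_⟩
      have hxk : ‖x - u k‖ ≤ r * ε / 4 := by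
        rw [← dist_eq_norm]; exact hk.le
      have hb1 : ∀ j, dist (g (φ j) x) (g (φ j) (u k)) ≤ ε / 4 := by
        intro j
        rw [Real.dist_eq]
        calc |g (φ j) x - g (φ j) (u k)| ≤ ‖x - u k‖ / r := hglip _ _ _
          _ ≤ (r * ε / 4) / r := by gcongr
          _ = ε / 4 := by field_simp
      have h3 := hN m hm n hn
      have h4 := dist_triangle4 (g (φ m) x) (g (φ m) (u k)) (g (φ n) (u k)) (g (φ n) x)
      have h5 : dist (g (φ n) (u k)) (g (φ n) x) ≤ ε / 4 := by
        rw [dist_comm]; exact hb1 n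
      calc dist (g (φ m) x) (g (φ n) x)
          ≤ dist (g (φ m) x) (g (φ m) (u k)) + dist (g (φ m) (u k)) (g (φ n) (u k))
            + dist (g (φ n) (u k)) (g (φ n) x) := h4
        _ < ε := by linarith [hb1 m]
    exact cauchySeq_tendsto_of_complete hC
  choose glim hglim using hex
  have hglim0 : glim 0 = 0 := by
    refine tendsto_nhds_unique (hglim 0) ?_
    have he : (fun n => g (φ n) (0:EuclideanSpace ℂ (Fin d))) = fun _ => (0:ℝ) := by
      funext n; exact gauge_zero
    rw [he]
    exact tendsto_const_nhds
  have hglimnn : ∀ x, 0 ≤ glim x := fun x => ge_of_tendsto' (hglim x) (fun n => hgnn _ x)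
  have hglimlip : ∀ x y, |glim x - glim y| ≤ ‖x - y‖ / r := by
    intro x y
    have hd : Tendsto (fun n => dist (g (φ n) x) (g (φ n) y)) atTop
        (𝓝 (dist (glim x) (glim y))) := (hglim x).dist (hglim y)
    have := le_of_tendsto hd (Eventually.of_forall fun n => by
      rw [Real.dist_eq]; exact hglip _ x y)
    rwa [Real.dist_eq] at this
  have hglimhom : ∀ (t : ℝ), 0 ≤ t → ∀ x, glim (t • x) = t * glim x := by
    intro t ht x
    refine tendsto_nhds_unique (hglim (t • x)) ?_
    have he : (fun n => g (φ n) (t • x)) = fun n => t * g (φ n) x := by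
      funext n; exact hghom _ t ht x
    rw [he]
    exact (hglim x).const_mul t
  have hlw : LipschitzWith (Real.toNNReal r⁻¹) glim := by
    apply LipschitzWith.of_dist_le_mul
    intro x y
    rw [Real.dist_eq, dist_eq_norm, Real.coe_toNNReal _ (inv_nonneg.2 hrpos.le)]
    calc |glim x - glim y| ≤ ‖x - y‖ / r := hglimlip x y
      _ = r⁻¹ * ‖x - y‖ := by rw [div_eq_inv_mul]
  have hcont : Continuous glim := hlw.continuous
  set Ω : Set (EuclideanSpace ℂ (Fin d)) := {x | glim (x - p) < 1} with hΩdef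
  have hΩmem : ∀ x, x ∈ Ω ↔ glim (x - p) < 1 := fun x => Iff.rfl
  have hΩopen : IsOpen Ω := by
    have he : Ω = (fun x => glim (x - p)) ⁻¹' (Iio 1) := rfl
    rw [he]
    exact (hcont.comp (continuous_id.sub continuous_const)).isOpen_preimage _ isOpen_Iio
  have hΩconv : Convex ℝ Ω := by
    intro x hx y hy a b ha hb hab
    rw [hΩmem] at hx hy ⊢
    have e : a • x + b • y - p = a • (x - p) + b • (y - p) := by
      have e2 : a • (x - p) + b • (y - p) = a • x + b • y - (a + b) • p := by
        rw [smul_sub, smul_sub, add_smul]; abel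
      rw [e2, hab, one_smul]
    rw [e]
    have hle : ∀ n, g (φ n) (a • (x - p) + b • (y - p)) ≤
        a * g (φ n) (x - p) + b * g (φ n) (y - p) := by
      intro n
      calc g (φ n) (a • (x - p) + b • (y - p))
          ≤ gauge (S (φ n)) (a • (x - p)) + gauge (S (φ n)) (b • (y - p)) :=
            gauge_add_le (hSconv _) (habs _) _ _
        _ = a * g (φ n) (x - p) + b * g (φ n) (y - p) := by
            rw [show gauge (S (φ n)) (a • (x - p)) = g (φ n) (a • (x - p)) from rfl,
              show gauge (S (φ n)) (b • (y - p)) = g (φ n) (b • (y - p)) from rfl,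
              hghom _ a ha, hghom _ b hb]
    have hlim := le_of_tendsto_of_tendsto' (hglim (a • (x - p) + b • (y - p)))
      (((hglim (x - p)).const_mul a).add ((hglim (y - p)).const_mul b)) hle
    rcases eq_or_lt_of_le ha with hae | hapos
    · have hb1 : b = 1 := by linarith
      have hcomb : a * glim (x - p) + b * glim (y - p) < 1 := by
        rw [← hae, hb1, zero_mul, one_mul, zero_add]
        exact hy
      linarith
    · nlinarith [mul_pos hapos (by linarith : (0:ℝ) < 1 - glim (x - p)),
        mul_nonneg hb (by linarith : (0:ℝ) ≤ 1 - glim (y - p))]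
  have hev : ∀ x, glim (x - p) < 1 → ∀ᶠ n in atTop, x ∈ Ωn (φ n) := by
    intro x hx
    have hevlt := (hglim (x - p)).eventually_lt_const hx
    filter_upwards [hevlt] with n hn
    have hmem : x - p ∈ S (φ n) := (hgiff (φ n) (x - p)).1 hn
    rw [hmemS, sub_add_cancel] at hmem
    exact hmem
  have hpΩ : p ∈ Ω := by
    rw [hΩmem, sub_self, hglim0]
    norm_num
  have hdisj : ∀ m : Fin d, Zset d m ∩ Ω = ∅ := by
    intro m
    rw [eq_empty_iff_forall_notMem]
    rintro x ⟨hxZ, hxΩ⟩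
    obtain ⟨n, hn⟩ := (hev x ((hΩmem x).1 hxΩ)).exists
    have hZ := ((h (φ n)).2 m).1
    rw [eq_empty_iff_forall_notMem] at hZ
    exact hZ x ⟨hxZ, hn⟩
  have hsqΩ : ∀ m : Fin d, ∀ w ∈ D1set,
      p + w • EuclideanSpace.single m (1:ℂ) ∈ Ω := by
    intro m w hw
    rw [hΩmem, add_sub_cancel_left]
    have hlim : glim (w • EuclideanSpace.single m (1:ℂ)) ≤ (|w.re| + |w.im| + 1) / 2 :=
      le_of_tendsto (hglim _) (Eventually.of_forall fun n => hsqS (φ n) m w hw)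
    have hs1 : |w.re| + |w.im| < 1 := hw
    linarith
  have hNCL : NoComplexLine Ω := S2.noComplexLine_of hΩopen hΩconv hpΩ hdisj
  have hKd : Ω ∈ Kd d := ⟨⟨⟨hΩopen, hΩconv, ⟨p, hpΩ⟩⟩, hNCL⟩, fun m => ⟨hdisj m, hsqΩ m⟩⟩
  have hunif : ∀ M : ℝ, ∀ ε : ℝ, 0 < ε → ∀ᶠ n in atTop,
      ∀ x ∈ closedBall (0 : EuclideanSpace ℂ (Fin d)) M, |g (φ n) x - glim x| ≤ ε := by
    intro M ε hε
    have hδ : (0:ℝ) < r * ε / 4 := by positivity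
    obtain ⟨t, hts, htf, htcov⟩ :=
      (isCompact_closedBall (0 : EuclideanSpace ℂ (Fin d)) M).finite_cover_balls hδ
    have hevt : ∀ᶠ n in atTop, ∀ y ∈ t, |g (φ n) y - glim y| < ε / 4 := by
      rw [eventually_all_finite htf]
      intro y hy
      have hb := (hglim y).eventually (Metric.ball_mem_nhds (glim y)
        (by linarith : (0:ℝ) < ε/4))
      filter_upwards [hb] with n hn
      rw [← Real.dist_eq]
      exact mem_ball.1 hn
    filter_upwards [hevt] with n hn x hx
    obtain ⟨y, hyt, hxy⟩ : ∃ y ∈ t, x ∈ ball y (r * ε / 4) := by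
      have := htcov hx
      simpa using this
    have hxy' : ‖x - y‖ ≤ r * ε / 4 := by
      rw [← dist_eq_norm]; exact (mem_ball.1 hxy).le
    have l1 : |g (φ n) x - g (φ n) y| ≤ ε / 4 := by
      calc |g (φ n) x - g (φ n) y| ≤ ‖x - y‖ / r := hglip _ x y
        _ ≤ (r * ε / 4) / r := by gcongr
        _ = ε / 4 := by field_simp
    have l2 : |glim x - glim y| ≤ ε / 4 := by
      calc |glim x - glim y| ≤ ‖x - y‖ / r := hglimlip x y
        _ ≤ (r * ε / 4) / r := by gcongr
        _ = ε / 4 := by field_simp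
    have l3 := hn y hyt
    have t1 := abs_sub_le (g (φ n) x) (g (φ n) y) (glim x)
    have t2 := abs_sub_le (g (φ n) y) (glim y) (glim x)
    have t3 : |glim y - glim x| ≤ ε/4 := by rw [abs_sub_comm]; exact l2
    linarith
  refine ⟨φ, hφmono, Ω, hKd, 2, two_pos, fun R hR => ?_⟩
  rw [Metric.tendsto_atTop]
  intro ε hε
  have hRpos : (0:ℝ) < R + 1 := by linarith
  set ε' : ℝ := min (ε / (2 * (R + 1))) 1 with hε'def
  have hε'pos : 0 < ε' := lt_min (by positivity) one_pos
  have hε'le1 : ε' ≤ 1 := min_le_right _ _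
  obtain ⟨N, hN⟩ := eventually_atTop.1 (hunif (R + 1) ε' hε'pos)
  refine ⟨N, fun n hn => ?_⟩
  have hA : ∀ x, x ∈ Ωn (φ n) ↔ g (φ n) (x - p) < 1 := by
    intro x
    constructor
    · intro hx
      rw [hgiff, hmemS, sub_add_cancel]
      exact hx
    · intro hx
      rw [hgiff, hmemS, sub_add_cancel] at hx
      exact hx
  have hclose : ∀ x ∈ closedBall (0:EuclideanSpace ℂ (Fin d)) (R + 1),
      |g (φ n) x - glim x| ≤ ε' := hN n hn
  have hb := S2.haus_bound (p := p) (le_of_eq hpnorm) hR hε'pos hε'le1 hA hΩmem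
    (hghom (φ n)) (fun s hs x => hglimhom s hs x) (hgnn (φ n)) hglimnn hclose
  have hnn : (0:ℝ) ≤ hausdorffDist (Ωn (φ n) ∩ ball 0 R) (Ω ∩ ball 0 R) :=
    hausdorffDist_nonneg
  rw [Real.dist_eq, sub_zero]
  rw [abs_of_nonneg hnn]
  calc hausdorffDist (Ωn (φ n) ∩ ball 0 R) (Ω ∩ ball 0 R) ≤ ε' * (R + 1) := hb
    _ ≤ (ε / (2 * (R + 1))) * (R + 1) :=
        mul_le_mul_of_nonneg_right (min_le_left _ _) (by linarith)
    _ = ε / 2 := by field_simp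
    _ < ε := by linarith
end
end

section
/- Let Ω ⊂ ℂ × ℂ be an open convex set, let D_1 ⊂ ℂ be a non-empty open convex cone (i.e., t·D_1 = D_1 for every t > 0), and let D_2 ⊂ ℂ be a non-empty open convex set. If D_1 × {0} is contained in the closure of Ω and {0} × D_2 is contained in the closure of Ω, then D_1 × D_2 ⊂ Ω. -/
open Set Metric Filter Topology
open scoped ENNReal NNReal

noncomputable section

open scoped Pointwise in
/-- If `Ω ⊆ ℂ × ℂ` is open and convex, `D₁ ⊆ ℂ` is a non-empty open
convex cone, `D₂ ⊆ ℂ` is non-empty open convex, and `D₁ × {0}` and `{0} × D₂` are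
contained in the closure of `Ω`, then `D₁ × D₂ ⊆ Ω`. -/
theorem statement5 (Ω : Set (ℂ × ℂ)) (hopen : IsOpen Ω) (hconv : Convex ℝ Ω)
    (D1 D2 : Set ℂ)
    (hD1open : IsOpen D1) (hD1conv : Convex ℝ D1) (hD1ne : D1.Nonempty)
    (hD1cone : ∀ t : ℝ, 0 < t → t • D1 = D1)
    (hD2open : IsOpen D2) (hD2conv : Convex ℝ D2) (hD2ne : D2.Nonempty)
    (h1 : D1 ×ˢ ({0} : Set ℂ) ⊆ closure Ω)
    (h2 : ({0} : Set ℂ) ×ˢ D2 ⊆ closure Ω) :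
    D1 ×ˢ D2 ⊆ Ω := by
  -- Step 1: `D1 ×ˢ D2 ⊆ closure Ω`.
  have hclos : D1 ×ˢ D2 ⊆ closure Ω := by
    rintro ⟨z, w⟩ ⟨hz, hw⟩
    -- find `t ∈ (0,1)` with `t⁻¹ • w ∈ D2`
    have hc : ContinuousAt (fun t : ℝ => t⁻¹ • w) 1 :=
      ((continuousAt_inv₀ one_ne_zero)).smul continuousAt_const
    have h1' : ∀ᶠ t in 𝓝 (1 : ℝ), t⁻¹ • w ∈ D2 := by
      apply hc.eventually_mem (hD2open.mem_nhds ?_)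
      simpa using hw
    have h2' : ∀ᶠ t in 𝓝 (1 : ℝ), (0 : ℝ) < t :=
      eventually_gt_nhds (by norm_num)
    obtain ⟨t, ⟨htD2, ht0⟩, ht1⟩ :=
      ((((h1'.and h2')).filter_mono (nhdsWithin_le_nhds (s := Iio (1 : ℝ)))).and
        eventually_mem_nhdsWithin).exists
    have ht1' : t < 1 := ht1
    have h1t : (0 : ℝ) < 1 - t := by linarith
    -- the two endpoints
    have ha : (((1 - t)⁻¹ • z, (0 : ℂ)) : ℂ × ℂ) ∈ closure Ω := by
      apply h1
      refine ⟨?_, rfl⟩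
      rw [← hD1cone ((1 - t)⁻¹) (by positivity)]
      exact smul_mem_smul_set hz
    have hb : (((0 : ℂ), t⁻¹ • w) : ℂ × ℂ) ∈ closure Ω := by
      exact h2 ⟨rfl, htD2⟩
    have hcomb := hconv.closure ha hb (le_of_lt h1t) (le_of_lt ht0) (by ring)
    have heq : (1 - t) • (((1 - t)⁻¹ • z, (0 : ℂ)) : ℂ × ℂ)
        + t • (((0 : ℂ), t⁻¹ • w) : ℂ × ℂ) = (z, w) := by
      have hne : (1 - t) ≠ 0 := ne_of_gt h1t
      have hne' : t ≠ 0 := ne_of_gt ht0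
      have hneC : ((1 : ℂ) - (t : ℂ)) ≠ 0 := by
        have := Complex.ofReal_ne_zero.mpr hne
        push_cast at this
        exact this
      have hneC' : (t : ℂ) ≠ 0 := Complex.ofReal_ne_zero.mpr hne'
      ext <;> simp [Prod.smul_mk, smul_smul] <;> field_simp
    rwa [heq] at hcomb
  -- Step 2: an open subset of the closure of an open convex set is in the set
  rintro ⟨z, w⟩ hp
  have hpc : ((z, w) : ℂ × ℂ) ∈ closure Ω := hclos hp
  have hΩne : Ω.Nonempty := by
    rcases closure_nonempty_iff.mp ⟨_, hpc⟩ with h; exact h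
  obtain ⟨y, hy⟩ := hΩne
  -- find a nearby point of `D1 ×ˢ D2` on the far side of `(z,w)` from `y`
  obtain ⟨ε, hε, hball⟩ := Metric.isOpen_iff.mp (hD1open.prod hD2open) _ hp
  set p : ℂ × ℂ := (z, w)
  set r : ℝ := ε / (2 * (‖p - y‖ + 1)) with hr
  have hr0 : 0 < r := by positivity
  have hp' : p + r • (p - y) ∈ D1 ×ˢ D2 := by
    apply hball
    rw [Metric.mem_ball, dist_eq_norm]
    have : p + r • (p - y) - p = r • (p - y) := by abel
    rw [this, norm_smul, Real.norm_eq_abs, abs_of_pos hr0]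
    calc r * ‖p - y‖ ≤ r * (‖p - y‖ + 1) := by
          apply mul_le_mul_of_nonneg_left (by linarith) hr0.le
      _ = ε / (2 * (‖p - y‖ + 1)) * (‖p - y‖ + 1) := rfl
      _ = ε / 2 := by
          have hA : (0 : ℝ) < ‖p - y‖ + 1 := by positivity
          field_simp
      _ < ε := by linarith
  -- express `p` as a strict convex combination of `y ∈ Ω` and the closure point
  have h1r : (0 : ℝ) < 1 + r := by linarith
  have hkey := hconv.combo_interior_closure_mem_interior
    (x := y) (y := p + r • (p - y)) (a := r / (1 + r)) (b := 1 / (1 + r))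
    (by rwa [hopen.interior_eq]) (hclos hp')
    (by positivity) (by positivity) (by field_simp; ring)
  have heq : (r / (1 + r)) • y + (1 / (1 + r)) • (p + r • (p - y)) = p := by
    match_scalars <;> field_simp <;> ring
  rw [heq, hopen.interior_eq] at hkey
  exact hkey
end
end

section
/- Suppose Ω_n is a sequence of convex domains in ℂ^d containing no complex affine line converging in the local Hausdorff topology to a convex domain Ω ∈ 𝕏_d, p_n ∈ Ω_n ∩ Ω is a sequence converging to p ∈ Ω, and v_n are unit vectors in ℂ^d converging to v. Then limsup_{n→∞} k_{Ω_n}(p_n; v_n) ≤ k_Ω(p; v). -/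
open Set Metric Filter Topology
open scoped ENNReal NNReal

noncomputable section

set_option linter.unnecessarySimpa false

section Aux

variable {E : Type*} [NormedAddCommGroup E] [NormedSpace ℂ E]

lemma kob_bddBelow (Ω : Set E) (z v : E) :
    BddBelow { c : ℝ | ∃ (ξ : ℂ) (f : ℂ → E),
      DifferentiableOn ℂ f (Metric.ball 0 1) ∧ MapsTo f (Metric.ball 0 1) Ω ∧
      f 0 = z ∧ ξ • deriv f 0 = v ∧ c = ‖ξ‖ } := by
  refine ⟨0, ?_⟩
  rintro c ⟨ξ, f, -, -, -, -, rfl⟩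
  exact norm_nonneg ξ

lemma kob_le {Ω : Set E} {z v : E} {ξ : ℂ} {f : ℂ → E}
    (h1 : DifferentiableOn ℂ f (Metric.ball 0 1)) (h2 : MapsTo f (Metric.ball 0 1) Ω)
    (h3 : f 0 = z) (h4 : ξ • deriv f 0 = v) : kob Ω z v ≤ ‖ξ‖ :=
  csInf_le (kob_bddBelow Ω z v) ⟨ξ, f, h1, h2, h3, h4, rfl⟩

/-- Absorption of compact subsets: any compact `K ⊆ Ω` is eventually contained (with a
uniform thickening) in the sets `Ωn n`. -/
lemma absorb {d : ℕ} {Ωn : ℕ → Set (EuclideanSpace ℂ (Fin d))}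
    {Ω : Set (EuclideanSpace ℂ (Fin d))}
    (hΩn : ∀ n, IsConvexDomain (Ωn n)) (hΩopen : IsOpen Ω)
    (hconv : LocHausConv Ωn Ω)
    {p : ℕ → EuclideanSpace ℂ (Fin d)} {plim : EuclideanSpace ℂ (Fin d)}
    (hp : ∀ n, p n ∈ Ωn n) (hplim : plim ∈ Ω)
    (hptend : Tendsto p atTop (nhds plim))
    {K : Set (EuclideanSpace ℂ (Fin d))} (hK : IsCompact K) (hKΩ : K ⊆ Ω) :
    ∃ δ > 0, ∀ᶠ n in atTop, Metric.cthickening δ K ⊆ Ωn n := by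
  obtain ⟨R₀, hR₀, hH⟩ := hconv
  obtain ⟨δ', hδ', hsub⟩ := hK.exists_cthickening_subset_open hΩopen hKΩ
  refine ⟨δ' / 2, by positivity, ?_⟩
  obtain ⟨M, hM⟩ := (hK.cthickening (r := δ')).isBounded.subset_ball
    (0 : EuclideanSpace ℂ (Fin d))
  set R : ℝ := max R₀ (max M (‖plim‖ + 1)) with hRdef
  have hRR₀ : R₀ ≤ R := le_max_left _ _
  have hMR : M ≤ R := le_trans (le_max_left _ _) (le_max_right _ _)
  have hplimR : ‖plim‖ < R :=
    lt_of_lt_of_le (by linarith) (le_trans (le_max_right _ _) (le_max_right _ _))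
  have hplimB : plim ∈ Metric.ball (0 : EuclideanSpace ℂ (Fin d)) R := by
    simpa [Metric.mem_ball, dist_eq_norm] using hplimR
  have hev1 : ∀ᶠ n in atTop,
      Metric.hausdorffDist (Ωn n ∩ Metric.ball 0 R) (Ω ∩ Metric.ball 0 R) < δ' / 4 :=
    (hH R hRR₀).eventually_lt_const (by positivity)
  have hev2 : ∀ᶠ n in atTop, p n ∈ Metric.ball (0 : EuclideanSpace ℂ (Fin d)) R :=
    hptend.eventually (Metric.isOpen_ball.eventually_mem hplimB)
  filter_upwards [hev1, hev2] with n hn1 hn2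
  intro y hy
  by_contra hyn
  obtain ⟨ℓ, hℓ⟩ := geometric_hahn_banach_open_point (hΩn n).2.1 (hΩn n).1 hyn
  have hℓ0 : ℓ ≠ 0 := by
    intro h
    have := hℓ (p n) (hp n)
    rw [h] at this
    simp at this
  have hℓnorm : (0 : ℝ) < ‖ℓ‖ := norm_pos_iff.mpr hℓ0
  set L : EuclideanSpace ℂ (Fin d) →L[ℝ] ℝ := ‖ℓ‖⁻¹ • ℓ with hLdef
  have hLnorm : ‖L‖ = 1 := by
    have : ‖L‖ = ‖ℓ‖⁻¹ * ‖ℓ‖ := by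
      rw [hLdef]
      exact norm_smul_of_nonneg (by positivity) ℓ
    rw [this, inv_mul_cancel₀ (ne_of_gt hℓnorm)]
  have hLsep : ∀ a ∈ Ωn n, L a < L y := by
    intro a ha
    simp only [hLdef, ContinuousLinearMap.smul_apply, smul_eq_mul]
    exact mul_lt_mul_of_pos_left (hℓ a ha) (inv_pos.mpr hℓnorm)
  obtain ⟨u, hu1, hu2⟩ := L.exists_lt_apply_of_lt_opNorm
    (show (1:ℝ)/2 < ‖L‖ by rw [hLnorm]; norm_num)
  obtain ⟨u', hu'1, hu'2⟩ : ∃ u', ‖u'‖ ≤ 1 ∧ 1/2 < L u' := by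
    rcases le_or_gt (L u) 0 with h | h
    · refine ⟨-u, by simpa using hu1.le, ?_⟩
      rw [map_neg]
      rw [Real.norm_eq_abs, abs_of_nonpos h] at hu2
      linarith
    · exact ⟨u, hu1.le, by rwa [Real.norm_eq_abs, abs_of_pos h] at hu2⟩
  set y' : EuclideanSpace ℂ (Fin d) := y + (δ'/2) • u' with hy'def
  have hyy' : dist y' y ≤ δ'/2 := by
    rw [hy'def, dist_eq_norm, add_sub_cancel_left, norm_smul, Real.norm_eq_abs,
      abs_of_pos (by positivity)]
    nlinarith
  have hy'K : y' ∈ Metric.cthickening δ' K := by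
    rw [Metric.mem_cthickening_iff] at hy ⊢
    calc EMetric.infEdist y' K ≤ EMetric.infEdist y K + edist y' y :=
          EMetric.infEdist_le_infEdist_add_edist
      _ ≤ ENNReal.ofReal (δ'/2) + ENNReal.ofReal (δ'/2) := by
          refine add_le_add hy ?_
          rw [edist_dist]
          exact ENNReal.ofReal_le_ofReal hyy'
      _ = ENNReal.ofReal δ' := by
          rw [← ENNReal.ofReal_add (by positivity) (by positivity)]
          norm_num
  have hy'Ω : y' ∈ Ω := hsub hy'K
  have hy'B : y' ∈ Metric.ball (0 : EuclideanSpace ℂ (Fin d)) R :=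
    Metric.ball_subset_ball hMR (hM hy'K)
  have hfin := Metric.hausdorffEdist_ne_top_of_nonempty_of_bounded
      (s := Ωn n ∩ Metric.ball 0 R) (t := Ω ∩ Metric.ball 0 R)
      ⟨p n, hp n, hn2⟩ ⟨plim, hplim, hplimB⟩
      (Metric.isBounded_ball.subset inter_subset_right)
      (Metric.isBounded_ball.subset inter_subset_right)
  have hy'mem : y' ∈ Ω ∩ Metric.ball 0 R := ⟨hy'Ω, hy'B⟩
  obtain ⟨z, hz, hzd⟩ := Metric.exists_dist_lt_of_hausdorffDist_lt' hy'mem hn1 hfin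
  have h1 : L z < L y := hLsep z hz.1
  have h2 : |L z - L y'| ≤ dist z y' := by
    calc |L z - L y'| = ‖L (z - y')‖ := by rw [map_sub]; rfl
      _ ≤ ‖L‖ * ‖z - y'‖ := L.le_opNorm _
      _ = dist z y' := by rw [hLnorm, one_mul, dist_eq_norm]
  have h3 : L y' = L y + (δ'/2) * L u' := by
    rw [hy'def, map_add, map_smul]
    simp [smul_eq_mul]
  have h4 : L y' - L z ≤ |L z - L y'| := by
    rw [abs_sub_comm]
    exact le_abs_self _
  have h5 : (δ'/2) * (1/2) < (δ'/2) * L u' :=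
    mul_lt_mul_of_pos_left hu'2 (by positivity)
  linarith
end Aux


/-- upper semicontinuity of the Kobayashi metric under local Hausdorff
convergence: `limsup k_{Ω_n}(p_n; v_n) ≤ k_Ω(p; v)` (limsup taken in `ℝ≥0∞`). -/
theorem statement8 (d : ℕ) (Ωn : ℕ → Set (EuclideanSpace ℂ (Fin d)))
    (hΩn : ∀ n, InX (Ωn n))
    (Ω : Set (EuclideanSpace ℂ (Fin d))) (hΩ : InX Ω)
    (hconv : LocHausConv Ωn Ω)
    (p : ℕ → EuclideanSpace ℂ (Fin d)) (plim : EuclideanSpace ℂ (Fin d))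
    (hp : ∀ n, p n ∈ Ωn n ∩ Ω) (hplim : plim ∈ Ω) (hptend : Tendsto p atTop (nhds plim))
    (v : ℕ → EuclideanSpace ℂ (Fin d)) (vlim : EuclideanSpace ℂ (Fin d))
    (hv : ∀ n, ‖v n‖ = 1) (hvtend : Tendsto v atTop (nhds vlim)) :
    Filter.limsup (fun n => ENNReal.ofReal (kob (Ωn n) (p n) (v n))) atTop ≤
      ENNReal.ofReal (kob Ω plim vlim) := by
  have hvlim : ‖vlim‖ = 1 := by
    have h1 : Tendsto (fun n => ‖v n‖) atTop (nhds ‖vlim‖) := hvtend.norm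
    have h2 : Tendsto (fun n => ‖v n‖) atTop (nhds 1) := by
      simpa [hv] using (tendsto_const_nhds : Tendsto (fun _ : ℕ => (1:ℝ)) atTop (nhds 1))
    exact tendsto_nhds_unique h1 h2
  -- the defining set for `kob Ω plim vlim` is nonempty
  obtain ⟨r, hr, hball⟩ := Metric.isOpen_iff.1 hΩ.1.1 plim hplim
  have hSne : { c : ℝ | ∃ (ξ : ℂ) (f : ℂ → EuclideanSpace ℂ (Fin d)),
      DifferentiableOn ℂ f (Metric.ball 0 1) ∧ MapsTo f (Metric.ball 0 1) Ω ∧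
      f 0 = plim ∧ ξ • deriv f 0 = vlim ∧ c = ‖ξ‖ }.Nonempty := by
    set w₀ : EuclideanSpace ℂ (Fin d) := ((r:ℂ)/2) • vlim with hw₀
    refine ⟨‖(2/(r:ℂ))‖, 2/(r:ℂ), fun lam => plim + lam • w₀, ?_, ?_, by simp, ?_, rfl⟩
    · exact ((differentiable_id.smul_const w₀).const_add plim).differentiableOn
    · intro lam hlam
      apply hball
      rw [Metric.mem_ball, dist_eq_norm, add_sub_cancel_left, norm_smul, hw₀, norm_smul,
        hvlim]
      have h1 : ‖lam‖ < 1 := by simpa [Metric.mem_ball, dist_eq_norm] using hlam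
      have h2 : ‖(r:ℂ)/2‖ = r/2 := by
        rw [norm_div]
        simp [Complex.norm_real, abs_of_pos hr]
      rw [h2]
      nlinarith [norm_nonneg lam]
    · have hd : HasDerivAt (fun lam : ℂ => plim + lam • w₀) ((1:ℂ) • w₀) 0 :=
        ((hasDerivAt_id (0:ℂ)).smul_const w₀).const_add plim
      rw [hd.deriv, one_smul, hw₀, smul_smul]
      have hrne : (r:ℂ) ≠ 0 := by exact_mod_cast ne_of_gt hr
      have : (2/(r:ℂ)) * ((r:ℂ)/2) = 1 := by
        field_simp
      rw [this, one_smul]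
  -- main estimate
  apply ENNReal.le_of_forall_pos_le_add
  intro ε hε _
  have hεr : (0:ℝ) < (ε:ℝ) := hε
  have key : Filter.limsup (fun n => ENNReal.ofReal (kob (Ωn n) (p n) (v n))) atTop ≤
      ENNReal.ofReal (kob Ω plim vlim + ε) := by
    -- choose a near-optimal competitor for Ω
    have hlt : kob Ω plim vlim < kob Ω plim vlim + (ε:ℝ)/2 := by linarith
    obtain ⟨c, hcS, hclt⟩ := (csInf_lt_iff (kob_bddBelow Ω plim vlim) hSne).1 hlt
    obtain ⟨ξ, f, hfdiff, hfmaps, hf0, hfd, hceq⟩ := hcS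
    have hξ0 : ξ ≠ 0 := by
      rintro rfl
      rw [zero_smul] at hfd
      rw [← hfd] at hvlim
      simp at hvlim
    have hc0 : 0 < c := by
      rw [hceq]
      exact norm_pos_iff.mpr hξ0
    set t : ℝ := c / (c + (ε:ℝ)/2) with ht
    have ht0 : 0 < t := by positivity
    have ht1 : t < 1 := by
      rw [ht, div_lt_one (by positivity)]
      linarith
    have htne : ((t:ℝ):ℂ) ≠ 0 := by
      simp only [ne_eq, Complex.ofReal_eq_zero]
      exact ne_of_gt ht0
    set K : Set (EuclideanSpace ℂ (Fin d)) := f '' Metric.closedBall 0 t with hK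
    have hsubball : Metric.closedBall (0:ℂ) t ⊆ Metric.ball (0:ℂ) 1 :=
      (Metric.closedBall_subset_ball ht1)
    have hKcpt : IsCompact K :=
      (isCompact_closedBall _ _).image_of_continuousOn (hfdiff.continuousOn.mono hsubball)
    have hKΩ : K ⊆ Ω := by
      rintro x ⟨lam, hlam, rfl⟩
      exact hfmaps (hsubball hlam)
    obtain ⟨δ, hδ, habs⟩ := absorb (fun n => (hΩn n).1) hΩ.1.1 hconv (fun n => (hp n).1) hplim hptend hKcpt hKΩ
    set w : ℕ → EuclideanSpace ℂ (Fin d) := fun n => (((t:ℝ):ℂ)/ξ) • (v n - vlim) with hwdef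
    have hwten : Tendsto (fun n => ‖p n - plim‖ + ‖w n‖) atTop (nhds 0) := by
      have h1 : Tendsto (fun n => ‖p n - plim‖) atTop (nhds 0) :=
        tendsto_iff_norm_sub_tendsto_zero.1 hptend
      have h2 : Tendsto (fun n => ‖w n‖) atTop (nhds 0) := by
        have : Tendsto w atTop (nhds 0) := by
          have h3 : Tendsto (fun n => v n - vlim) atTop (nhds 0) := by
            have := hvtend.sub (tendsto_const_nhds : Tendsto (fun _ : ℕ => vlim) atTop (nhds vlim))
            simpa using this
          simpa using h3.const_smul (((t:ℝ):ℂ)/ξ)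
        simpa using this.norm
      simpa using h1.add h2
    have hev3 : ∀ᶠ n in atTop, ‖p n - plim‖ + ‖w n‖ < δ := hwten.eventually_lt_const hδ
    have hevmain : ∀ᶠ n in atTop,
        ENNReal.ofReal (kob (Ωn n) (p n) (v n)) ≤ ENNReal.ofReal (kob Ω plim vlim + ε) := by
      filter_upwards [habs, hev3] with n hn1 hn2
      set g : ℂ → EuclideanSpace ℂ (Fin d) :=
        fun lam => f (((t:ℝ):ℂ) * lam) + ((p n - plim) + lam • w n) with hg
      have hfa : HasDerivAt f (deriv f 0) 0 :=
        (hfdiff.differentiableAt (Metric.isOpen_ball.mem_nhds (by simp))).hasDerivAt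
      have hmaps2 : ∀ lam : ℂ, lam ∈ Metric.ball (0:ℂ) 1 →
          ((t:ℝ):ℂ) * lam ∈ Metric.closedBall (0:ℂ) t := by
        intro lam hlam
        have h1 : ‖lam‖ < 1 := by simpa [Metric.mem_ball, dist_eq_norm] using hlam
        rw [Metric.mem_closedBall, dist_eq_norm, sub_zero, norm_mul]
        have h2 : ‖((t:ℝ):ℂ)‖ = t := by
          simp [Complex.norm_real, abs_of_pos ht0]
        rw [h2]
        nlinarith [norm_nonneg lam]
      have hgdiff : DifferentiableOn ℂ g (Metric.ball 0 1) := by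
        apply DifferentiableOn.add
        · apply DifferentiableOn.comp hfdiff
          · exact (differentiable_id.const_mul (((t:ℝ):ℂ))).differentiableOn
          · intro lam hlam
            exact hsubball (hmaps2 lam hlam)
        · exact (((differentiable_id.smul_const (w n)).const_add (p n - plim))).differentiableOn
      have hgmaps : MapsTo g (Metric.ball 0 1) (Ωn n) := by
        intro lam hlam
        apply hn1
        apply Metric.mem_cthickening_of_dist_le (g lam) (f (((t:ℝ):ℂ) * lam)) δ K
          ⟨_, hmaps2 lam hlam, rfl⟩
        rw [hg, dist_eq_norm]
        simp only [add_sub_cancel_left]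
        have h1 : ‖lam‖ < 1 := by simpa [Metric.mem_ball, dist_eq_norm] using hlam
        calc ‖(p n - plim) + lam • w n‖ ≤ ‖p n - plim‖ + ‖lam • w n‖ := norm_add_le _ _
          _ ≤ ‖p n - plim‖ + ‖w n‖ := by
              rw [norm_smul]
              nlinarith [norm_nonneg (w n), norm_nonneg lam]
          _ ≤ δ := hn2.le
      have hg0 : g 0 = p n := by
        rw [hg]
        simp [hf0]
      have hgd : HasDerivAt g (((t:ℝ):ℂ) • deriv f 0 + w n) 0 := by
        have h1 : HasDerivAt (fun lam : ℂ => f (((t:ℝ):ℂ) * lam)) (((t:ℝ):ℂ) • deriv f 0) 0 := by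
          have hfa' : HasDerivAt f (deriv f 0) (((t:ℝ):ℂ) * 0) := by
            rwa [mul_zero]
          have hmul : HasDerivAt (fun lam : ℂ => ((t:ℝ):ℂ) * lam) (((t:ℝ):ℂ)) 0 := by
            simpa using (hasDerivAt_id (0:ℂ)).const_mul (((t:ℝ):ℂ))
          exact HasDerivAt.scomp (x := (0:ℂ)) hfa' hmul
        have h2 : HasDerivAt (fun lam : ℂ => (p n - plim) + lam • w n) (w n) 0 := by
          simpa using ((hasDerivAt_id (0:ℂ)).smul_const (w n)).const_add (p n - plim)
        exact h1.add h2
      have hξn : (ξ/((t:ℝ):ℂ)) • deriv g 0 = v n := by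
        have hwn : w n = (((t:ℝ):ℂ)/ξ) • (v n - vlim) := rfl
        rw [hgd.deriv, smul_add, smul_smul, hwn, smul_smul]
        have e1 : ξ/((t:ℝ):ℂ) * ((t:ℝ):ℂ) = ξ := by field_simp
        have e2 : ξ/((t:ℝ):ℂ) * (((t:ℝ):ℂ)/ξ) = 1 := by field_simp
        rw [e1, e2, one_smul, hfd]
        abel
      have hkle : kob (Ωn n) (p n) (v n) ≤ ‖ξ/((t:ℝ):ℂ)‖ :=
        kob_le hgdiff hgmaps hg0 hξn
      have hnorm : ‖ξ/((t:ℝ):ℂ)‖ = c + (ε:ℝ)/2 := by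
        rw [norm_div, ← hceq]
        have h2 : ‖((t:ℝ):ℂ)‖ = t := by
          simp [Complex.norm_real, abs_of_pos ht0]
        rw [h2, ht]
        field_simp
      have hfinal : kob (Ωn n) (p n) (v n) ≤ kob Ω plim vlim + (ε:ℝ) := by
        rw [hnorm] at hkle
        linarith
      exact ENNReal.ofReal_le_ofReal hfinal
    exact Filter.limsup_le_of_le (by isBoundedDefault) hevmain
  calc Filter.limsup (fun n => ENNReal.ofReal (kob (Ωn n) (p n) (v n))) atTop
      ≤ ENNReal.ofReal (kob Ω plim vlim + ε) := key
    _ ≤ ENNReal.ofReal (kob Ω plim vlim) + ENNReal.ofReal ε := ENNReal.ofReal_add_le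
    _ = ENNReal.ofReal (kob Ω plim vlim) + ε := by rw [ENNReal.ofReal_coe_nnreal]
end
end

section
/- Let Ω ⊂ ℂ^d be a convex domain containing no complex affine line. Then the infinitesimal Kobayashi metric of Ω is non-degenerate: k_Ω(z; v) > 0 for every z ∈ Ω and every non-zero vector v ∈ ℂ^d. -/
open Set Metric Filter Topology
open scoped ENNReal NNReal

noncomputable section

/-- The infinitesimal Kobayashi metric of a convex domain containing
no complex affine line is non-degenerate. -/
theorem statement12 (d : ℕ) (Ω : Set (EuclideanSpace ℂ (Fin d))) (hΩ : InX Ω)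
    (z : EuclideanSpace ℂ (Fin d)) (hz : z ∈ Ω)
    (v : EuclideanSpace ℂ (Fin d)) (hv : v ≠ 0) :
    0 < kob Ω z v := by
  classical
  obtain ⟨⟨hopen, hconv, -⟩, hline⟩ := hΩ
  obtain ⟨lam0, hp⟩ : ∃ lam : ℂ, z + lam • v ∉ Ω := by
    by_contra h; push_neg at h; exact hline z v hv h
  obtain ⟨ℓ, hℓ⟩ := geometric_hahn_banach_open_point hconv hopen hp
  set L : EuclideanSpace ℂ (Fin d) →L[ℂ] ℂ := ℓ.extendTo𝕜' with hLdef
  have hre : ∀ x, (L x).re = ℓ x := by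
    intro x
    have h1 : L x = (ℓ x : ℂ) - Complex.I * (ℓ (Complex.I • x) : ℂ) :=
      ContinuousLinearMap.extendTo𝕜'_apply ℓ x
    rw [h1]
    simp [Complex.sub_re, Complex.mul_re]
  set t : ℝ := ℓ (z + lam0 • v) with ht
  have htz : ℓ z < t := hℓ z hz
  have hLv : L v ≠ 0 := by
    intro h0
    have h2 : (L (z + lam0 • v)).re = (L z).re + (lam0 * L v).re := by
      rw [map_add, map_smul]
      simp [Complex.add_re, smul_eq_mul]
    rw [hre, hre, h0, mul_zero, Complex.zero_re, add_zero] at h2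
    rw [← ht] at h2
    exact absurd h2.symm (ne_of_lt htz)
  set C : ℝ := 2 * Real.exp (t - ℓ z) with hCdef
  have hC : 0 < C := by positivity
  -- every candidate norm is bounded below
  have hbound : ∀ c ∈ { c : ℝ | ∃ (ξ : ℂ) (f : ℂ → EuclideanSpace ℂ (Fin d)),
      DifferentiableOn ℂ f (Metric.ball 0 1) ∧ MapsTo f (Metric.ball 0 1) Ω ∧
      f 0 = z ∧ ξ • deriv f 0 = v ∧ c = ‖ξ‖ }, ‖L v‖ / C ≤ c := by
    rintro c ⟨ξ, f, hdiff, hmaps, hf0, hξ, rfl⟩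
    set g : ℂ → ℂ := fun w => Complex.exp (L (f w) - t) with hgdef
    have h0mem : (0 : ℂ) ∈ Metric.ball (0 : ℂ) 1 := by simp
    have hgdiff : DifferentiableOn ℂ g (Metric.ball 0 1) := by
      apply DifferentiableOn.cexp
      exact (L.differentiable.comp_differentiableOn hdiff).sub_const _
    have habs : ∀ w ∈ Metric.ball (0 : ℂ) 1, ‖g w‖ < 1 := by
      intro w hw
      have hfw : f w ∈ Ω := hmaps hw
      have : (L (f w) - t).re < 0 := by
        simp only [Complex.sub_re, Complex.ofReal_re, hre]
        linarith [hℓ (f w) hfw]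
      simpa [hgdef, Complex.norm_exp] using Real.exp_lt_one_iff.2 this
    have hgmaps : MapsTo g (Metric.ball 0 1) (Metric.ball (g 0) 2) := by
      intro w hw
      have h1 := habs w hw
      have h2 := habs 0 h0mem
      have : dist (g w) (g 0) < 2 := by
        calc dist (g w) (g 0) ≤ ‖g w‖ + ‖g 0‖ := dist_le_norm_add_norm _ _
          _ < 2 := by linarith
      exact this
    have hschwarz : ‖deriv g 0‖ ≤ 2 / 1 :=
      Complex.norm_deriv_le_div_of_mapsTo_ball hgdiff (hgmaps.mono_right Metric.ball_subset_closedBall) one_pos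
    have hF : HasDerivAt f (deriv f 0) 0 :=
      (hdiff.differentiableAt (isOpen_ball.mem_nhds h0mem)).hasDerivAt
    have h1 : HasDerivAt (fun w => L (f w) - (t : ℂ)) (L (deriv f 0)) 0 :=
      (L.hasFDerivAt.comp_hasDerivAt 0 hF).sub_const _
    have h2 : HasDerivAt g (Complex.exp (L (f 0) - t) * L (deriv f 0)) 0 := h1.cexp
    have hderiv : deriv g 0 = Complex.exp (L (f 0) - t) * L (deriv f 0) := h2.deriv
    have hnorm : Real.exp (ℓ z - t) * ‖L (deriv f 0)‖ ≤ 2 := by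
      have := hschwarz
      rw [hderiv] at this
      rw [norm_mul, Complex.norm_exp] at this
      have hre' : (L (f 0) - (t : ℂ)).re = ℓ z - t := by
        simp only [Complex.sub_re, Complex.ofReal_re, hre, hf0]
      rw [hre'] at this
      linarith
    have hLd : ‖L (deriv f 0)‖ ≤ C := by
      have hexp : (0 : ℝ) < Real.exp (ℓ z - t) := Real.exp_pos _
      rw [hCdef]
      have h3 : ‖L (deriv f 0)‖ ≤ 2 / Real.exp (ℓ z - t) := by
        rw [le_div_iff₀ hexp]; linarith [hnorm]
      calc ‖L (deriv f 0)‖ ≤ 2 / Real.exp (ℓ z - t) := h3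
        _ = 2 * Real.exp (t - ℓ z) := by
          rw [Real.exp_sub, Real.exp_sub]; field_simp
    have hLveq : ‖L v‖ = ‖ξ‖ * ‖L (deriv f 0)‖ := by
      rw [← hξ, map_smul, smul_eq_mul, norm_mul]
    rw [div_le_iff₀ hC, hLveq]
    have : ‖ξ‖ * ‖L (deriv f 0)‖ ≤ ‖ξ‖ * C :=
      mul_le_mul_of_nonneg_left hLd (norm_nonneg _)
    linarith
  -- nonemptiness of the candidate set
  obtain ⟨ε, hε, hball⟩ := Metric.isOpen_iff.1 hopen z hz
  have hvnorm : (0 : ℝ) < ‖v‖ := norm_pos_iff.2 hv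
  set r : ℝ := ε / (2 * ‖v‖) with hrdef
  have hr : 0 < r := by positivity
  have hne : { c : ℝ | ∃ (ξ : ℂ) (f : ℂ → EuclideanSpace ℂ (Fin d)),
      DifferentiableOn ℂ f (Metric.ball 0 1) ∧ MapsTo f (Metric.ball 0 1) Ω ∧
      f 0 = z ∧ ξ • deriv f 0 = v ∧ c = ‖ξ‖ }.Nonempty := by
    refine ⟨‖((r : ℂ))⁻¹‖, ((r : ℂ))⁻¹, fun w => z + w • ((r : ℂ) • v), ?_, ?_, ?_, ?_, rfl⟩
    · intro w hw
      exact ((differentiable_id.smul_const ((r:ℂ) • v)).const_add z).differentiableAt.differentiableWithinAt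
    · intro w hw
      apply hball
      simp only [Metric.mem_ball, dist_eq_norm, add_sub_cancel_left]
      rw [norm_smul, norm_smul]
      simp only [Metric.mem_ball, dist_zero_right] at hw
      have : ‖w‖ * (‖(r : ℂ)‖ * ‖v‖) < 1 * (‖(r : ℂ)‖ * ‖v‖) := by
        apply mul_lt_mul_of_pos_right hw
        have : ‖(r : ℂ)‖ = r := by
          rw [Complex.norm_real, Real.norm_of_nonneg hr.le]
        rw [this]; positivity
      have hrn : ‖(r : ℂ)‖ = r := by
        rw [Complex.norm_real, Real.norm_of_nonneg hr.le]
      rw [hrn] at this ⊢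
      have : ‖w‖ * (r * ‖v‖) < r * ‖v‖ := by linarith
      have hrv : r * ‖v‖ = ε / 2 := by
        rw [hrdef]; field_simp
      rw [hrv] at this
      linarith
    · simp
    · have hd : HasDerivAt (fun w : ℂ => z + w • ((r : ℂ) • v)) ((r : ℂ) • v) 0 := by
        have : HasDerivAt (fun w : ℂ => w • ((r : ℂ) • v)) ((1 : ℂ) • ((r : ℂ) • v)) 0 :=
          (hasDerivAt_id (0 : ℂ)).smul_const _
        simpa using this.const_add z
      rw [hd.deriv, smul_smul, inv_mul_cancel₀, one_smul]
      exact_mod_cast hr.ne'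
  have hpos : 0 < ‖L v‖ / C := by
    apply div_pos (norm_pos_iff.2 hLv) hC
  exact lt_of_lt_of_le hpos (le_csInf hne hbound)
end
end
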